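/- Let H be a virtually polycyclic group and A ⊆ H a subgroup. Then there exists a natural number N such that for every subgroup B ⊆ H containing A with finite index, the index [B : A] is at most N. -/

import Mathlib

/-- A group is polycyclic if it admits a subnormal series with cyclic factors. -/
def IsPolycyclic (G : Type*) [Group G] : Prop :=
  ∃ (n : ℕ) (s : Fin (n + 1) → Subgroup G),
    s 0 = ⊥ ∧ s (Fin.last n) = ⊤ ∧
    ∀ i : Fin n, s i.castSucc ≤ s i.succ ∧
      ∃ _ : ((s i.castSucc).subgroupOf (s i.succ)).Normal,
        IsCyclic (↥(s i.succ) ⧸ (s i.castSucc).subgroupOf (s i.succ))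

/-- A group is virtually polycyclic if it has a polycyclic subgroup of finite index. -/
def IsVirtuallyPolycyclic (G : Type*) [Group G] : Prop :=
  ∃ H : Subgroup G, IsPolycyclic H ∧ H.FiniteIndex

open Subgroup
open scoped Pointwise

/-- The bounded-relative-index property. -/
def PB (G : Type*) [Group G] : Prop :=
  ∀ A : Subgroup G, ∃ N : ℕ, ∀ B : Subgroup G, A ≤ B → A.relIndex B ≠ 0 → A.relIndex B ≤ N

lemma pb_of_mulEquiv {G G' : Type*} [Group G] [Group G'] (e : G ≃* G') (h : PB G) : PB G' := by
  intro A'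
  obtain ⟨N, hN⟩ := h (A'.comap (e : G →* G'))
  refine ⟨N, fun B' hle hne => ?_⟩
  have key : (A'.comap (e : G →* G')).relIndex (B'.comap (e : G →* G')) = A'.relIndex B' := by
    rw [Subgroup.relIndex_comap, Subgroup.map_comap_eq_self_of_surjective e.surjective]
  rw [← key] at hne ⊢
  exact hN _ (Subgroup.comap_mono hle) hne

lemma pb_of_subsingleton {G : Type*} [Group G] [Subsingleton G] : PB G := by
  intro A
  refine ⟨1, fun B hle _ => ?_⟩
  have hBA : B ≤ A := fun x _ => by
    have : x = 1 := Subsingleton.elim x 1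
    rw [this]; exact A.one_mem
  rw [Subgroup.relIndex_eq_one.mpr hBA]

lemma pb_of_isCyclic {G : Type*} [Group G] (hG : IsCyclic G) : PB G := by
  intro A
  by_cases hA : A.index = 0
  · refine ⟨1, fun B hle hne => ?_⟩
    haveI := hG
    obtain ⟨g, hg⟩ := IsCyclic.exists_generator (α := G)
    have hgo : ¬ IsOfFinOrder g := by
      intro hfin
      have hfinG : Finite G := by
        have h1 : ((Subgroup.zpowers g : Subgroup G) : Set G).Finite := hfin.finite_zpowers
        have h2 : ((Subgroup.zpowers g : Subgroup G) : Set G) = Set.univ := by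
          ext x; simp [hg x]
        rw [h2, Set.finite_univ_iff] at h1
        exact h1
      have hAi : A.index ≠ 0 := Subgroup.index_ne_zero_of_finite
      exact hAi hA
    -- key fact: any element of infinite order generator forces torsion-freeness
    -- first show finite quotient by zpowers of any nontrivial element
    have hquot : ∀ a : G, a ≠ 1 → (Subgroup.zpowers a).index ≠ 0 := by
      intro a ha
      obtain ⟨k, hk⟩ := Subgroup.mem_zpowers_iff.mp (hg a)
      have hk0 : k ≠ 0 := by
        rintro rfl
        rw [zpow_zero] at hk; exact ha hk.symm
      set Kn : ℤ := (k.natAbs : ℤ) with hKn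
      have hKpos : 0 < Kn := by
        simp only [hKn]
        exact_mod_cast Int.natAbs_pos.mpr hk0
      have hgK : g ^ Kn ∈ Subgroup.zpowers a := by
        rcases Int.natAbs_eq k with h | h
        · rw [← hKn] at h
          rw [← h, hk]; exact Subgroup.mem_zpowers a
        · rw [← hKn] at h
          have : g ^ Kn = a⁻¹ := by
            rw [← zpow_neg_one, ← hk, ← zpow_mul]
            congr 1
            omega
          rw [this]
          exact (Subgroup.zpowers a).inv_mem (Subgroup.mem_zpowers a)
      have hfinq : Finite (G ⧸ Subgroup.zpowers a) := by
        have hsurj : Function.Surjective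
            (fun j : Fin k.natAbs => (QuotientGroup.mk (g ^ (j : ℤ)) : G ⧸ Subgroup.zpowers a)) := by
          intro x
          refine QuotientGroup.induction_on x ?_
          intro y
          obtain ⟨m, hm⟩ := Subgroup.mem_zpowers_iff.mp (hg y)
          have hr0 : 0 ≤ m % Kn := Int.emod_nonneg m (by omega)
          have hrlt : m % Kn < Kn := Int.emod_lt_of_pos m hKpos
          refine ⟨⟨(m % Kn).toNat, by omega⟩, ?_⟩
          have hco : (((m % Kn).toNat : ℤ)) = m % Kn := Int.toNat_of_nonneg hr0
          simp only [hco]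
          rw [← hm]
          apply (QuotientGroup.eq (s := Subgroup.zpowers a)).mpr
          have : (g ^ (m % Kn))⁻¹ * g ^ m = (g ^ Kn) ^ (m / Kn) := by
            rw [← zpow_neg, ← zpow_add, ← zpow_mul]
            congr 1
            have := Int.mul_ediv_add_emod m Kn
            ring_nf
            omega
          rw [this]
          exact Subgroup.zpow_mem _ hgK _
        exact Finite.of_surjective _ hsurj
      exact Subgroup.index_ne_zero_of_finite
    have hAbot : A = ⊥ := by
      by_contra hne'
      obtain ⟨a, haA, ha1⟩ : ∃ a ∈ A, a ≠ 1 := by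
        by_contra hc
        push_neg at hc
        exact hne' (by ext x; simp only [Subgroup.mem_bot]; exact ⟨fun hx => hc x hx, fun hx => hx ▸ A.one_mem⟩)
      have hzle : Subgroup.zpowers a ≤ A := Subgroup.zpowers_le.mpr haA
      have := Subgroup.index_dvd_of_le hzle
      exact hquot a ha1 (Nat.eq_zero_of_zero_dvd (hA ▸ this))
    have hBbot : B ≤ A := by
      subst hAbot
      rw [Subgroup.relIndex_bot_left] at hne
      have hfinB : Finite ↥B := Nat.finite_of_card_ne_zero hne
      intro x hx
      rw [Subgroup.mem_bot]
      by_contra hx1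
      obtain ⟨m, hm⟩ := Subgroup.mem_zpowers_iff.mp (hg x)
      have hm0 : m ≠ 0 := by
        rintro rfl
        rw [zpow_zero] at hm; exact hx1 hm.symm
      have hxfin : IsOfFinOrder x := by
        have h1 : IsOfFinOrder (⟨x, hx⟩ : ↥B) := isOfFinOrder_of_finite _
        rw [← orderOf_pos_iff] at h1 ⊢
        rwa [Subgroup.orderOf_mk] at h1
      obtain ⟨n, hn0, hn⟩ := isOfFinOrder_iff_zpow_eq_one.mp hxfin
      apply hgo
      apply isOfFinOrder_iff_zpow_eq_one.mpr
      refine ⟨m * n, mul_ne_zero hm0 hn0, ?_⟩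
      rw [zpow_mul, hm, hn]
    rw [Subgroup.relIndex_eq_one.mpr hBbot]
  · exact ⟨A.index, fun B hle _ =>
      Nat.le_of_dvd (Nat.pos_of_ne_zero hA) (Subgroup.relIndex_dvd_index_of_le hle)⟩

/-- If `N` is normal, the index of `A` in `A ⊔ N` is at most the index of `A ⊓ N` in `N`. -/
lemma relindex_sup_le_aux {G : Type*} [Group G] (A N : Subgroup G) [N.Normal]
    (h : A.relIndex N ≠ 0) : A.relIndex (A ⊔ N) ≤ A.relIndex N := by
  have h' : (A.subgroupOf N).index ≠ 0 := h
  have hfin : Finite (↥N ⧸ A.subgroupOf N) := by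
    apply Nat.finite_of_card_ne_zero
    rwa [← Subgroup.index_eq_card]
  let f : ↥N → (↥(A ⊔ N) ⧸ A.subgroupOf (A ⊔ N)) :=
    fun n => QuotientGroup.mk ⟨(n : G), (le_sup_right : N ≤ A ⊔ N) n.2⟩
  have hresp : ∀ a b : ↥N, (QuotientGroup.leftRel (A.subgroupOf N)) a b → f a = f b := by
    intro a b hab
    rw [QuotientGroup.leftRel_apply] at hab
    apply (QuotientGroup.eq (s := A.subgroupOf (A ⊔ N))).mpr
    rw [Subgroup.mem_subgroupOf] at hab ⊢
    exact hab
  let F : (↥N ⧸ A.subgroupOf N) → (↥(A ⊔ N) ⧸ A.subgroupOf (A ⊔ N)) :=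
    fun x => Quotient.liftOn' x f hresp
  have hF : Function.Surjective F := by
    intro x
    refine QuotientGroup.induction_on x ?_
    intro m
    have hm : (m : G) ∈ ((N : Set G) * (A : Set G)) := by
      rw [← Subgroup.normal_mul N A]
      show (m : G) ∈ (N ⊔ A : Subgroup G)
      rw [sup_comm]
      exact m.2
    obtain ⟨n, hn, a, ha, hna⟩ := hm
    refine ⟨QuotientGroup.mk ⟨n, hn⟩, ?_⟩
    show f ⟨n, hn⟩ = QuotientGroup.mk m
    apply (QuotientGroup.eq (s := A.subgroupOf (A ⊔ N))).mpr
    rw [Subgroup.mem_subgroupOf]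
    show (n : G)⁻¹ * (m : G) ∈ A
    rw [← hna]
    simpa using ha
  have hcard := Nat.card_le_card_of_surjective F hF
  rw [← Subgroup.index_eq_card, ← Subgroup.index_eq_card] at hcard
  exact hcard

lemma pb_extension {G : Type*} [Group G] (K : Subgroup G) (hKn : K.Normal)
    (hK : PB ↥K) (hQ : PB (G ⧸ K)) : PB G := by
  haveI := hKn
  intro A
  obtain ⟨NK, hNK⟩ := hK (A.subgroupOf K)
  obtain ⟨NQ, hNQ⟩ := hQ (A.map (QuotientGroup.mk' K))
  refine ⟨NK * NQ, fun B hAB hne => ?_⟩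
  set π := QuotientGroup.mk' K with hπ
  set Ab := A.subgroupOf B with hAb
  set Kb := K.subgroupOf B with hKb
  have hAbne : Ab.index ≠ 0 := hne
  have hdec : Ab.relIndex (Ab ⊔ Kb) * (Ab ⊔ Kb).index = Ab.index :=
    Subgroup.relIndex_mul_index le_sup_left
  -- factor 1
  have h1ne : Ab.relIndex Kb ≠ 0 := by
    intro h0
    apply hAbne
    rw [← Subgroup.relIndex_top_right]
    exact Subgroup.relIndex_eq_zero_of_le_right le_top h0
  have h1 : Ab.relIndex (Ab ⊔ Kb) ≤ Ab.relIndex Kb := relindex_sup_le_aux Ab Kb h1ne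
  have hKside : Ab.relIndex Kb = (A.subgroupOf K).relIndex (B.subgroupOf K) := by
    have e1 : Ab.relIndex Kb = A.relIndex (K ⊓ B) := by
      rw [hAb, hKb, ← Subgroup.inf_subgroupOf_right K B]
      exact Subgroup.relIndex_subgroupOf inf_le_right
    have e2 : (A.subgroupOf K).relIndex (B.subgroupOf K) = A.relIndex (B ⊓ K) := by
      rw [← Subgroup.inf_subgroupOf_right B K]
      exact Subgroup.relIndex_subgroupOf inf_le_right
    rw [e1, e2, inf_comm]
  have h2le : A.subgroupOf K ≤ B.subgroupOf K := fun x hx => hAB hx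
  have h2ne : (A.subgroupOf K).relIndex (B.subgroupOf K) ≠ 0 := hKside ▸ h1ne
  have hf1 : Ab.relIndex (Ab ⊔ Kb) ≤ NK :=
    le_trans h1 (le_of_le_of_eq (le_of_eq hKside) rfl |>.trans (hNK _ h2le h2ne))
  -- factor 2
  have hcomap : (A.map π).comap (π.comp B.subtype) = (A ⊔ K).subgroupOf B := by
    rw [← Subgroup.comap_comap, Subgroup.comap_map_eq, QuotientGroup.ker_mk']
    rfl
  have hmaptop : Subgroup.map (π.comp B.subtype) ⊤ = B.map π := by
    rw [← Subgroup.map_map, ← MonoidHom.range_eq_map B.subtype, Subgroup.range_subtype]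
  have hrel2 : (A.map π).relIndex (B.map π) = ((A ⊔ K).subgroupOf B).index := by
    have h := Subgroup.relIndex_comap (H := A.map π) (π.comp B.subtype) (⊤ : Subgroup ↥B)
    rw [Subgroup.relIndex_top_right, hcomap, hmaptop] at h
    exact h.symm
  have hDed : (A ⊔ K).subgroupOf B ≤ Ab ⊔ Kb := by
    rintro ⟨x, hxB⟩ hx
    rw [Subgroup.mem_subgroupOf] at hx
    have hx' : x ∈ ((A : Set G) * (K : Set G)) := by
      rw [← Subgroup.mul_normal A K]
      exact hx
    obtain ⟨a, haA, k, hkK, hak⟩ := hx'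
    have haB : a ∈ B := hAB haA
    have hkB : k ∈ B := by
      have : k = a⁻¹ * x := by rw [← hak]; group
      rw [this]
      exact B.mul_mem (B.inv_mem haB) hxB
    have hxeq : (⟨x, hxB⟩ : ↥B) = ⟨a, haB⟩ * ⟨k, hkB⟩ := by
      apply Subtype.ext
      simp [← hak]
    rw [hxeq]
    exact Subgroup.mul_mem _
      (Subgroup.mem_sup_left (show (⟨a, haB⟩ : ↥B) ∈ Ab from haA))
      (Subgroup.mem_sup_right (show (⟨k, hkB⟩ : ↥B) ∈ Kb from hkK))
  have h3ne : ((A ⊔ K).subgroupOf B).index ≠ 0 := by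
    intro h0
    apply hAbne
    have hle' : Ab ≤ (A ⊔ K).subgroupOf B :=
      fun x hx => show (x : G) ∈ A ⊔ K from (le_sup_left : A ≤ A ⊔ K) hx
    have := Subgroup.index_dvd_of_le hle'
    rw [h0] at this
    exact Nat.eq_zero_of_zero_dvd this
  have hf2 : (Ab ⊔ Kb).index ≤ NQ := by
    have hdvd : (Ab ⊔ Kb).index ∣ ((A ⊔ K).subgroupOf B).index := Subgroup.index_dvd_of_le hDed
    have hQb : (A.map π).relIndex (B.map π) ≤ NQ := by
      refine hNQ _ (Subgroup.map_mono hAB) ?_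
      rw [hrel2]
      exact h3ne
    calc (Ab ⊔ Kb).index ≤ ((A ⊔ K).subgroupOf B).index :=
          Nat.le_of_dvd (Nat.pos_of_ne_zero h3ne) hdvd
      _ = (A.map π).relIndex (B.map π) := hrel2.symm
      _ ≤ NQ := hQb
  calc A.relIndex B = Ab.relIndex (Ab ⊔ Kb) * (Ab ⊔ Kb).index := hdec.symm
    _ ≤ NK * NQ := Nat.mul_le_mul hf1 hf2

lemma pb_of_finiteIndex {G : Type*} [Group G] (K : Subgroup G) (hKi : K.index ≠ 0)
    (hK : PB ↥K) : PB G := by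
  intro A
  obtain ⟨NK, hNK⟩ := hK (A.subgroupOf K)
  refine ⟨NK * K.index, fun B hAB hne => ?_⟩
  have hKB : K.relIndex B ≠ 0 := fun h0 => hKi (Subgroup.index_eq_zero_of_relIndex_eq_zero h0)
  have hinf_ne : (A ⊓ K).relIndex B ≠ 0 := Subgroup.relIndex_inf_ne_zero hne hKB
  have hstep : A.relIndex B ≤ (A ⊓ K).relIndex B :=
    Nat.le_of_dvd (Nat.pos_of_ne_zero hinf_ne) (Subgroup.relIndex_dvd_of_le_left B inf_le_left)
  have hsplit : (A ⊓ K).relIndex (B ⊓ K) * (B ⊓ K).relIndex B = (A ⊓ K).relIndex B :=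
    Subgroup.relIndex_mul_relIndex _ _ _ (inf_le_inf_right K hAB) inf_le_left
  have hfac1ne : (A ⊓ K).relIndex (B ⊓ K) ≠ 0 := by
    intro h0
    apply hinf_ne
    rw [← hsplit, h0, zero_mul]
  have htrans : (A.subgroupOf K).relIndex (B.subgroupOf K) = (A ⊓ K).relIndex (B ⊓ K) := by
    calc (A.subgroupOf K).relIndex (B.subgroupOf K)
        = A.relIndex (B ⊓ K) := by
          rw [← Subgroup.inf_subgroupOf_right B K]
          exact Subgroup.relIndex_subgroupOf inf_le_right
      _ = (A ⊓ (B ⊓ K)).relIndex (B ⊓ K) := (Subgroup.inf_relIndex_right A (B ⊓ K)).symm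
      _ = (A ⊓ K).relIndex (B ⊓ K) := by rw [← inf_assoc, inf_eq_left.mpr hAB]
  have hfac1 : (A ⊓ K).relIndex (B ⊓ K) ≤ NK := by
    have h := hNK (B.subgroupOf K) (fun x hx => hAB hx) (by rw [htrans]; exact hfac1ne)
    rwa [htrans] at h
  have hfac2 : (B ⊓ K).relIndex B ≤ K.index := by
    have e : (B ⊓ K).relIndex B = K.relIndex B := by
      rw [inf_comm]
      exact Subgroup.inf_relIndex_right K B
    have h' := Subgroup.relIndex_le_of_le_right (le_top : B ≤ ⊤)
      (H := K) (by rw [Subgroup.relIndex_top_right]; exact hKi)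
    rw [Subgroup.relIndex_top_right] at h'
    rw [e]
    exact h'
  calc A.relIndex B ≤ (A ⊓ K).relIndex B := hstep
    _ = (A ⊓ K).relIndex (B ⊓ K) * (B ⊓ K).relIndex B := hsplit.symm
    _ ≤ NK * K.index := Nat.mul_le_mul hfac1 hfac2

lemma pb_of_isPolycyclic {G : Type*} [Group G] (h : IsPolycyclic G) : PB G := by
  obtain ⟨n, s, h0, hlast, hstep⟩ := h
  have key : ∀ i : Fin (n + 1), PB ↥(s i) := by
    intro i
    induction i using Fin.induction with
    | zero =>
      rw [h0]
      have : Subsingleton ↥(⊥ : Subgroup G) := by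
        constructor
        intro a b
        apply Subtype.ext
        have ha : (a : G) = 1 := a.2
        have hb : (b : G) = 1 := b.2
        rw [ha, hb]
      exact pb_of_subsingleton
    | succ i ih =>
      obtain ⟨hle, hnorm, hcyc⟩ := hstep i
      exact pb_extension ((s i.castSucc).subgroupOf (s i.succ)) hnorm
        (pb_of_mulEquiv (Subgroup.subgroupOfEquivOfLe hle).symm ih)
        (pb_of_isCyclic hcyc)
  have hkey := key (Fin.last n)
  rw [hlast] at hkey
  exact pb_of_mulEquiv Subgroup.topEquiv hkey

theorem bounded_index_of_overgroups
    (H : Type*) [Group H] (hH : IsVirtuallyPolycyclic H) (A : Subgroup H) :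
    ∃ N : ℕ, ∀ B : Subgroup H, A ≤ B → (A.subgroupOf B).FiniteIndex →
      (A.subgroupOf B).index ≤ N := by
  obtain ⟨K, hpoly, hfin⟩ := hH
  have hPB : PB H := pb_of_finiteIndex K hfin.index_ne_zero (pb_of_isPolycyclic hpoly)
  obtain ⟨N, hN⟩ := hPB A
  exact ⟨N, fun B hle hf => hN B hle hf.index_ne_zero⟩
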